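/- Let C be a cycle of goods, u a nonnegative additive utility function on V(C), and n ≥ 2. Then for every vertex x of C, mms^(n-1)(C - x, u) ≥ mms^(n)(C, u), where C - x is the path obtained by deleting x from C. -/

import Mathlib

open scoped BigOperators

noncomputable section

/-- Total value of a bundle under an additive utility. -/
def bval {V : Type*} [DecidableEq V] (u : V → ℝ) (S : Finset V) : ℝ := ∑ v ∈ S, u v

/-- A `G`-bundle: a (possibly empty) set of vertices inducing a connected subgraph. -/
def IsBundle {V : Type*} (G : SimpleGraph V) (S : Finset V) : Prop :=
  (S : Set V) = ∅ ∨ (G.induce (S : Set V)).Connected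

/-- A split of the vertex set `A` into `n` pairwise disjoint `G`-bundles covering `A`. -/
def IsSplitOn {V : Type*} [DecidableEq V] (G : SimpleGraph V) (A : Finset V) (n : ℕ)
    (P : Fin n → Finset V) : Prop :=
  (∀ i, IsBundle G (P i)) ∧ (∀ i j, i ≠ j → Disjoint (P i) (P j)) ∧
  (∀ i, P i ⊆ A) ∧ (∀ v ∈ A, ∃ i, v ∈ P i)

/-- The maximin share over splits of `A` into `n` `G`-bundles. -/
def mmsOn {V : Type*} [DecidableEq V] (G : SimpleGraph V) (A : Finset V)
    (n : ℕ) (u : V → ℝ) : ℝ :=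
  sSup {q : ℝ | ∃ P : Fin n → Finset V, IsSplitOn G A n P ∧ ∀ i, q ≤ bval u (P i)}

/-- The maximin share `mms^(n)(G,u)`. -/
def mms {V : Type*} [DecidableEq V] [Fintype V] (G : SimpleGraph V)
    (n : ℕ) (u : V → ℝ) : ℝ := mmsOn G Finset.univ n u

/-- The cycle on `m` vertices, identified with `ZMod m`. -/
def cycleGraph (m : ℕ) : SimpleGraph (ZMod m) :=
  SimpleGraph.fromRel (fun v w => w = v + 1)

end

section Aux

open SimpleGraph

lemma single_conn' {V : Type*} (G : SimpleGraph V) (v : V) :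
    (G.induce ({v} : Set V)).Connected := by
  haveI : Nonempty ({v} : Set V) := ⟨⟨v, rfl⟩⟩
  constructor
  rintro ⟨a, ha⟩ ⟨b, hb⟩
  simp only [Set.mem_singleton_iff] at ha hb
  subst ha; subst hb
  exact Reachable.refl _

lemma union_conn' {V : Type*} [DecidableEq V] {G : SimpleGraph V} {A B : Finset V}
    (hA : (G.induce (A : Set V)).Connected) (hB : (G.induce (B : Set V)).Connected)
    {a b : V} (ha : a ∈ A) (hb : b ∈ B) (hadj : G.Adj a b) :
    (G.induce ((A ∪ B : Finset V) : Set V)).Connected := by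
  rw [Finset.coe_union]
  exact connected_induce_union hA.preconnected hB.preconnected ha hb hadj

lemma walk_pred' {V : Type*} {G : SimpleGraph V} {S : Set V} (Q : V → Prop)
    (step : ∀ v w : V, Q v → w ∈ S → G.Adj v w → Q w) :
    ∀ {a b : S}, (G.induce S).Walk a b → Q a.val → Q b.val := by
  intro a b p
  induction p with
  | nil => exact id
  | cons h p ih =>
    intro qa
    exact ih (step _ _ qa (by exact Subtype.mem _) h)

variable {m : ℕ} [NeZero m]

omit [NeZero m] in
lemma natCast_zmod_inj' {a b : ℕ} (ha : a < m) (hb : b < m) (h : (a : ZMod m) = b) : a = b := by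
  rw [← ZMod.val_cast_of_lt ha, ← ZMod.val_cast_of_lt hb, h]

lemma cast_val_zmod (a : ZMod m) : ((a.val : ℕ) : ZMod m) = a := by
  simp [ZMod.natCast_val, ZMod.cast_id]

omit [NeZero m] in
lemma cyc_adj' (hm : 3 ≤ m) (v : ZMod m) : (_root_.cycleGraph m).Adj v (v + 1) := by
  rw [_root_.cycleGraph, SimpleGraph.fromRel_adj]
  refine ⟨?_, Or.inl rfl⟩
  intro h
  have h1 : ((1 : ℕ) : ZMod m) = ((0 : ℕ) : ZMod m) := by
    push_cast
    linear_combination -h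
  have := natCast_zmod_inj' (by omega) (by omega) h1
  omega

omit [NeZero m] in
lemma arc_conn' (hm : 3 ≤ m) (y : ZMod m) (t : ℕ) :
    ((_root_.cycleGraph m).induce
      (((Finset.range (t + 1)).image (fun k : ℕ => y + (k : ZMod m)) : Finset (ZMod m)) :
        Set (ZMod m))).Connected := by
  induction t with
  | zero =>
    have : ((Finset.range 1).image (fun k : ℕ => y + (k : ZMod m))) = {y} := by simp
    rw [this, Finset.coe_singleton]
    exact single_conn' _ y
  | succ t ih =>
    have hset : ((Finset.range (t + 2)).image (fun k : ℕ => y + (k : ZMod m)))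
        = ((Finset.range (t + 1)).image (fun k : ℕ => y + (k : ZMod m)))
          ∪ {y + ((t + 1 : ℕ) : ZMod m)} := by
      rw [Finset.range_add_one, Finset.image_insert, Finset.insert_eq, Finset.union_comm]
    rw [hset]
    refine union_conn' ih (by rw [Finset.coe_singleton]; exact single_conn' _ _)
      (a := y + (t : ZMod m)) (b := y + ((t + 1 : ℕ) : ZMod m))
      (by simp; exact ⟨t, by omega, rfl⟩) (Finset.mem_singleton_self _) ?_
    have : y + ((t + 1 : ℕ) : ZMod m) = (y + (t : ZMod m)) + 1 := by push_cast; ring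
    rw [this]
    exact cyc_adj' hm _

lemma cycle_decomp' (hm : 3 ≤ m) (S : Finset (ZMod m)) (x : ZMod m) (hx : x ∈ S)
    (hconn : ((_root_.cycleGraph m).induce (S : Set (ZMod m))).Connected) (hne : S ≠ Finset.univ) :
    ∃ r l : ℕ, r + l + 1 ≤ m - 1 ∧
      S = (Finset.range (r + l + 1)).image (fun k : ℕ => x - (r : ZMod m) + (k : ZMod m)) ∧
      x + ((l + 1 : ℕ) : ZMod m) ∉ S ∧ x - ((r + 1 : ℕ) : ZMod m) ∉ S := by
  classical
  have hz : ∃ z : ZMod m, z ∉ S := by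
    by_contra h
    push_neg at h
    exact hne (Finset.eq_univ_iff_forall.2 h)
  obtain ⟨z, hzS⟩ := hz
  have hzx : z ≠ x := fun h => hzS (h ▸ hx)
  have Hb : ∃ k : ℕ, 1 ≤ k ∧ k ≤ m - 1 ∧ x + (k : ZMod m) ∉ S := by
    refine ⟨(z - x).val, ?_, ?_, ?_⟩
    · have : z - x ≠ 0 := sub_ne_zero.2 hzx
      have := (ZMod.val_eq_zero (z - x)).not.2 this
      omega
    · have := ZMod.val_lt (z - x); omega
    · have : x + ((z - x).val : ZMod m) = z := by rw [cast_val_zmod]; ring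
      rw [this]; exact hzS
  have Hc : ∃ k : ℕ, 1 ≤ k ∧ k ≤ m - 1 ∧ x - (k : ZMod m) ∉ S := by
    refine ⟨(x - z).val, ?_, ?_, ?_⟩
    · have : x - z ≠ 0 := sub_ne_zero.2 hzx.symm
      have := (ZMod.val_eq_zero (x - z)).not.2 this
      omega
    · have := ZMod.val_lt (x - z); omega
    · have : x - ((x - z).val : ZMod m) = z := by rw [cast_val_zmod]; ring
      rw [this]; exact hzS
  have Hb' : ∃ k : ℕ, 1 ≤ k ∧ x + (k : ZMod m) ∉ S := ⟨_, Hb.choose_spec.1, Hb.choose_spec.2.2⟩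
  have Hc' : ∃ k : ℕ, 1 ≤ k ∧ x - (k : ZMod m) ∉ S := ⟨_, Hc.choose_spec.1, Hc.choose_spec.2.2⟩
  set b := Nat.find Hb' with hbdef
  set c := Nat.find Hc' with hcdef
  have hb1 : 1 ≤ b := (Nat.find_spec Hb').1
  have hbS : x + (b : ZMod m) ∉ S := (Nat.find_spec Hb').2
  have hbm : b ≤ m - 1 :=
    (Nat.find_min' Hb' ⟨Hb.choose_spec.1, Hb.choose_spec.2.2⟩).trans Hb.choose_spec.2.1
  have hc1 : 1 ≤ c := (Nat.find_spec Hc').1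
  have hcS : x - (c : ZMod m) ∉ S := (Nat.find_spec Hc').2
  have hcm : c ≤ m - 1 :=
    (Nat.find_min' Hc' ⟨Hc.choose_spec.1, Hc.choose_spec.2.2⟩).trans Hc.choose_spec.2.1
  have hbmin : ∀ k, 1 ≤ k → k < b → x + (k : ZMod m) ∈ S := by
    intro k h1 hk
    have := Nat.find_min Hb' hk
    push_neg at this
    exact this h1
  have hcmin : ∀ k, 1 ≤ k → k < c → x - (k : ZMod m) ∈ S := by
    intro k h1 hk
    have := Nat.find_min Hc' hk
    push_neg at this
    exact this h1
  have hbc : b + c ≤ m := by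
    by_contra h
    push_neg at h
    have h1 : 1 ≤ m - c := by omega
    have h2 : m - c < b := by omega
    have := hbmin (m - c) h1 h2
    have heq : x + ((m - c : ℕ) : ZMod m) = x - (c : ZMod m) := by
      rw [Nat.cast_sub (by omega : c ≤ m), ZMod.natCast_self]
      ring
    rw [heq] at this
    exact hcS this
  refine ⟨c - 1, b - 1, by omega, ?_, ?_, ?_⟩
  · set r := c - 1 with hrdef
    set l := b - 1 with hldef
    set f : ℕ → ZMod m := fun k => x - (r : ZMod m) + (k : ZMod m) with hfdef
    have hAsubS : ∀ k, k ≤ r + l → f k ∈ S := by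
      intro k hk
      rcases le_or_gt k r with h | h
      · have hfk : f k = x - ((r - k : ℕ) : ZMod m) := by
          have hc : ((r - k : ℕ) : ZMod m) = (r : ZMod m) - (k : ZMod m) := Nat.cast_sub h
          rw [hfdef]; simp only []; rw [hc]; ring
        rcases Nat.eq_zero_or_pos (r - k) with h0 | h0
        · rw [hfk, h0]; simpa using hx
        · rw [hfk]; exact hcmin _ h0 (by omega)
      · have hfk : f k = x + ((k - r : ℕ) : ZMod m) := by
          have hc : ((k - r : ℕ) : ZMod m) = (k : ZMod m) - (r : ZMod m) := Nat.cast_sub (by omega)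
          rw [hfdef]; simp only []; rw [hc]; ring
        rw [hfk]; exact hbmin _ (by omega) (by omega)
    have hstep : ∀ v w : ZMod m, (∃ k, k ≤ r + l ∧ f k = v) → w ∈ (S : Set (ZMod m)) →
        (_root_.cycleGraph m).Adj v w → ∃ k, k ≤ r + l ∧ f k = w := by
      rintro v w ⟨k, hk, rfl⟩ hwS hadj
      rw [_root_.cycleGraph, SimpleGraph.fromRel_adj] at hadj
      rcases hadj.2 with h | h
      · rcases Nat.lt_or_ge k (r + l) with hlt | hge
        · exact ⟨k + 1, by omega, by rw [h, hfdef]; push_cast; ring⟩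
        · exfalso
          have hkeq : k = r + l := by omega
          have : w = x + ((l + 1 : ℕ) : ZMod m) := by
            rw [h, hfdef, hkeq]; push_cast; ring
          rw [this] at hwS
          rw [← Nat.succ_pred_eq_of_pos hb1] at hbS
          exact hbS (by simpa [hldef] using hwS)
      · have hw : w = f k - 1 := by rw [h]; ring
        rcases Nat.eq_zero_or_pos k with h0 | h0
        · exfalso
          have : w = x - ((r + 1 : ℕ) : ZMod m) := by
            rw [hw, hfdef, h0]; push_cast; ring
          rw [this] at hwS
          rw [← Nat.succ_pred_eq_of_pos hc1] at hcS
          exact hcS (by simpa [hrdef] using hwS)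
        · refine ⟨k - 1, by omega, ?_⟩
          have hc : ((k - 1 : ℕ) : ZMod m) = (k : ZMod m) - 1 := by
            push_cast [Nat.cast_sub h0]; ring
          rw [hw, hfdef]; simp only []; rw [hc]; ring
    have hSsubA : ∀ s ∈ S, ∃ k, k ≤ r + l ∧ f k = s := by
      intro s hs
      have hx' : x ∈ (S : Set (ZMod m)) := hx
      have hs' : s ∈ (S : Set (ZMod m)) := hs
      obtain ⟨p⟩ := hconn.preconnected ⟨x, hx'⟩ ⟨s, hs'⟩
      exact walk_pred' _ hstep p ⟨r, by omega, by rw [hfdef]; push_cast; ring⟩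
    ext v
    simp only [Finset.mem_image, Finset.mem_range]
    constructor
    · intro hv
      obtain ⟨k, hk, hfk⟩ := hSsubA v hv
      exact ⟨k, by omega, hfk⟩
    · rintro ⟨k, hk, rfl⟩
      exact hAsubS k (by omega)
  · rw [show b - 1 + 1 = b by omega]; exact hbS
  · rw [show c - 1 + 1 = c by omega]; exact hcS

end Aux

/-- deleting a vertex from a cycle does not decrease the maximin share
when the number of agents also drops by one. -/
theorem stmt4 (m n : ℕ) [NeZero m] (hm : 3 ≤ m) (hn : 2 ≤ n)
    (u : ZMod m → ℝ) (hu : ∀ v, 0 ≤ u v) (x : ZMod m) :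
    mms (cycleGraph m) n u ≤
      mmsOn (cycleGraph m) (Finset.univ.erase x) (n - 1) u := by
  classical
  -- the deleted-vertex path is an arc
  have herase : Finset.univ.erase x
      = (Finset.range (m - 1)).image (fun k : ℕ => (x + 1) + (k : ZMod m)) := by
    ext v
    simp only [Finset.mem_erase, Finset.mem_univ, and_true, Finset.mem_image, Finset.mem_range]
    constructor
    · intro hv
      have hd0 : v - x ≠ 0 := sub_ne_zero.2 hv
      have hd1 : 1 ≤ (v - x).val := by
        have := (ZMod.val_eq_zero (v - x)).not.2 hd0; omega
      have hdm : (v - x).val < m := ZMod.val_lt _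
      refine ⟨(v - x).val - 1, by omega, ?_⟩
      have hc : (((v - x).val - 1 : ℕ) : ZMod m) = (((v - x).val : ℕ) : ZMod m) - 1 := by
        push_cast [Nat.cast_sub hd1]; ring
      rw [hc, cast_val_zmod]
      ring
    · rintro ⟨k, hk, rfl⟩
      intro h
      have : ((k + 1 : ℕ) : ZMod m) = ((0 : ℕ) : ZMod m) := by
        push_cast
        linear_combination h
      have := natCast_zmod_inj' (by omega) (by omega) this
      omega
  have heraseconn : ((cycleGraph m).induce
      ((Finset.univ.erase x : Finset (ZMod m)) : Set (ZMod m))).Connected := by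
    rw [herase]
    have := arc_conn' (m := m) hm (x + 1) (m - 2)
    rwa [show m - 2 + 1 = m - 1 by omega] at this
  -- the trivial (n-1)-split of the path, witnessing 0
  haveI : NeZero (n - 1) := ⟨by omega⟩
  set j0 : Fin (n - 1) := ⟨0, by omega⟩ with hj0
  set Qt : Fin (n - 1) → Finset (ZMod m) :=
    fun j => if j = j0 then Finset.univ.erase x else ∅ with hQt
  have hQtsplit : IsSplitOn (cycleGraph m) (Finset.univ.erase x) (n - 1) Qt := by
    refine ⟨?_, ?_, ?_, ?_⟩
    · intro i
      by_cases h : i = j0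
      · simp only [hQt, if_pos h]
        exact Or.inr heraseconn
      · simp only [hQt, if_neg h]
        exact Or.inl (by simp)
    · intro i j hij
      by_cases hi : i = j0 <;> by_cases hj : j = j0
      · exact absurd (hi.trans hj.symm) hij
      · simp [hQt, hi, hj]
      · simp [hQt, hi, hj]
      · simp [hQt, hi, hj]
    · intro i
      by_cases h : i = j0 <;> simp [hQt, h]
    · intro v hv
      exact ⟨j0, by simp [hQt, hv]⟩
  -- bounds
  set B : ℝ := ∑ v, u v with hB
  set rhsSet : Set ℝ := {q : ℝ | ∃ P : Fin (n - 1) → Finset (ZMod m),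
      IsSplitOn (cycleGraph m) (Finset.univ.erase x) (n - 1) P ∧ ∀ i, q ≤ bval u (P i)}
    with hrhs
  have hbdd : BddAbove rhsSet := by
    refine ⟨B, ?_⟩
    rintro q ⟨P, hP, hq⟩
    refine (hq j0).trans ?_
    rw [bval, hB]
    exact Finset.sum_le_sum_of_subset_of_nonneg (Finset.subset_univ _) (fun i _ _ => hu i)
  have h0mem : (0 : ℝ) ∈ rhsSet := by
    refine ⟨Qt, hQtsplit, fun i => ?_⟩
    rw [bval]
    exact Finset.sum_nonneg (fun v _ => hu v)
  have h0le : (0 : ℝ) ≤ mmsOn (cycleGraph m) (Finset.univ.erase x) (n - 1) u := by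
    rw [mmsOn, ← hrhs]
    exact le_csSup hbdd h0mem
  have hfinish : ∀ q ∈ {q : ℝ | ∃ P : Fin n → Finset (ZMod m),
      IsSplitOn (cycleGraph m) Finset.univ n P ∧ ∀ i, q ≤ bval u (P i)},
      q ≤ mmsOn (cycleGraph m) (Finset.univ.erase x) (n - 1) u := by
    rintro q ⟨P, ⟨hbund, hdisj, hsubs, hcover⟩, hq⟩
    obtain ⟨i₀, hxi₀⟩ := hcover x (Finset.mem_univ x)
    by_cases hSuniv : P i₀ = Finset.univ
    · -- the bundle of x is everything: then q ≤ 0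
      haveI : Nontrivial (Fin n) := Fin.nontrivial_iff_two_le.2 hn
      obtain ⟨i₁, hi₁⟩ := exists_ne i₀
      have hP1 : P i₁ = ∅ := by
        refine Finset.eq_empty_of_forall_notMem (fun v hv => ?_)
        exact (Finset.disjoint_left.1 (hdisj i₁ i₀ hi₁) hv) (hSuniv ▸ Finset.mem_univ v)
      have hq0 : q ≤ 0 := by
        have := hq i₁
        rwa [hP1, bval, Finset.sum_empty] at this
      exact hq0.trans h0le
    · -- main case: decompose the bundle of x
      have hconnS : ((cycleGraph m).induce ((P i₀ : Finset (ZMod m)) : Set (ZMod m))).Connected := by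
        rcases hbund i₀ with h | h
        · exact absurd (by exact_mod_cast (Set.eq_empty_iff_forall_notMem.1 h x))
            (by simpa using hxi₀)
        · exact h
      obtain ⟨r, l, hrl, hSeq, hbS, hcS⟩ := cycle_decomp' hm (P i₀) x hxi₀ hconnS hSuniv
      set f : ℕ → ZMod m := fun k => x - (r : ZMod m) + (k : ZMod m) with hf
      set L : Finset (ZMod m) := (Finset.range l).image (fun k : ℕ => (x + 1) + (k : ZMod m)) with hL
      set R : Finset (ZMod m) := (Finset.range r).image f with hR
      set xb : ZMod m := x + ((l + 1 : ℕ) : ZMod m) with hxb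
      set xc : ZMod m := x - ((r + 1 : ℕ) : ZMod m) with hxc
      have hgf : ∀ k : ℕ, (x + 1) + (k : ZMod m) = f (r + 1 + k) := by
        intro k; rw [hf]; push_cast; ring
      have hxf : x = f r := by rw [hf]; ring
      have finj : ∀ k k' : ℕ, k < m → k' < m → f k = f k' → k = k' := by
        intro k k' hk hk' h
        rw [hf] at h
        simp only [] at h
        have : (k : ZMod m) = (k' : ZMod m) := by linear_combination h
        exact natCast_zmod_inj' hk hk' this
      have hLS : L ⊆ P i₀ := by
        intro v hv
        rw [hL, Finset.mem_image] at hv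
        obtain ⟨k, hk, rfl⟩ := hv
        rw [Finset.mem_range] at hk
        rw [hgf k, hSeq]
        exact Finset.mem_image_of_mem _ (Finset.mem_range.2 (by omega))
      have hRS : R ⊆ P i₀ := by
        intro v hv
        rw [hR, Finset.mem_image] at hv
        obtain ⟨k, hk, rfl⟩ := hv
        rw [Finset.mem_range] at hk
        rw [hSeq]
        exact Finset.mem_image_of_mem _ (Finset.mem_range.2 (by omega))
      have hxL : x ∉ L := by
        rw [hL, Finset.mem_image]
        rintro ⟨k, hk, h⟩
        rw [Finset.mem_range] at hk
        rw [hgf k] at h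
        have := finj _ _ (by omega) (by omega) (h.trans hxf)
        omega
      have hxR : x ∉ R := by
        rw [hR, Finset.mem_image]
        rintro ⟨k, hk, h⟩
        rw [Finset.mem_range] at hk
        have := finj _ _ (by omega) (by omega) (h.trans hxf)
        omega
      have hLR : ∀ v, v ∈ L → v ∈ R → False := by
        intro v hv hw
        rw [hL, Finset.mem_image] at hv
        rw [hR, Finset.mem_image] at hw
        obtain ⟨k, hk, rfl⟩ := hv
        obtain ⟨k', hk', h⟩ := hw
        rw [Finset.mem_range] at hk hk'
        rw [hgf k] at h
        have := finj _ _ (by omega) (by omega) h.symm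
        omega
      obtain ⟨j₁, hj₁⟩ := hcover xb (Finset.mem_univ xb)
      obtain ⟨j₂, hj₂⟩ := hcover xc (Finset.mem_univ xc)
      have hj₁i₀ : j₁ ≠ i₀ := fun h => hbS (h ▸ hj₁)
      have hj₂i₀ : j₂ ≠ i₀ := fun h => hcS (h ▸ hj₂)
      have hSerase : ∀ v ∈ P i₀, v ≠ x → v ∈ L ∨ v ∈ R := by
        intro v hv hvx
        rw [hSeq, Finset.mem_image] at hv
        obtain ⟨k, hk, rfl⟩ := hv
        rw [Finset.mem_range] at hk
        rcases lt_trichotomy k r with h | h | h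
        · exact Or.inr (by rw [hR]; exact Finset.mem_image_of_mem _ (Finset.mem_range.2 h))
        · exact absurd (h ▸ hxf).symm hvx
        · refine Or.inl ?_
          rw [hL, Finset.mem_image]
          refine ⟨k - r - 1, Finset.mem_range.2 (by omega), ?_⟩
          rw [hgf (k - r - 1)]
          congr 1
          omega
      -- re-index
      obtain ⟨n', rfl⟩ : ∃ n', n = n' + 2 := ⟨n - 2, by omega⟩
      set emb : Fin (n' + 1) → Fin (n' + 2) := i₀.succAbove with hemb
      have hembne : ∀ j, emb j ≠ i₀ := fun j => Fin.succAbove_ne i₀ j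
      have hembinj : Function.Injective emb := Fin.succAbove_right_injective
      have hsurj : ∀ k : Fin (n' + 2), k ≠ i₀ → ∃ j, emb j = k := by
        intro k hk
        exact Fin.exists_succAbove_eq hk
      set Q : Fin (n' + 1) → Finset (ZMod m) :=
        fun j => (P (emb j) ∪ (if emb j = j₁ then L else ∅)) ∪ (if emb j = j₂ then R else ∅)
        with hQ
      have hmemQ : ∀ j v, v ∈ Q j ↔
          v ∈ P (emb j) ∨ (emb j = j₁ ∧ v ∈ L) ∨ (emb j = j₂ ∧ v ∈ R) := by
        intro j v
        have hite : ∀ (c : Prop) (inst : Decidable c) (T : Finset (ZMod m)) (w : ZMod m),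
            (w ∈ (if c then T else ∅)) ↔ c ∧ w ∈ T := by
          intro c inst T w
          by_cases hc : c
          · simp [hc]
          · simp [hc]
        simp only [hQ, Finset.mem_union, hite]
        tauto
      -- bundles after merging
      have hPLb : ∀ T : Finset (ZMod m), IsBundle (cycleGraph m) T → xb ∈ T →
          IsBundle (cycleGraph m) (T ∪ L) := by
        intro T hT hxbT
        rcases Nat.eq_zero_or_pos l with h0 | h0
        · rw [hL, h0]
          simpa using hT
        · obtain ⟨l', rfl⟩ : ∃ l', l = l' + 1 := ⟨l - 1, by omega⟩
          have hTconn : ((cycleGraph m).induce ((T : Finset (ZMod m)) : Set (ZMod m))).Connected := by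
            rcases hT with h | h
            · exact absurd (by exact_mod_cast (Set.eq_empty_iff_forall_notMem.1 h xb))
                (by simpa using hxbT)
            · exact h
          have hLconn : ((cycleGraph m).induce ((L : Finset (ZMod m)) : Set (ZMod m))).Connected := by
            rw [hL]
            exact arc_conn' hm (x + 1) l'
          refine Or.inr (union_conn' hTconn hLconn hxbT
            (b := (x + 1) + (l' : ZMod m)) ?_ ?_)
          · rw [hL, Finset.mem_image]
            exact ⟨l', Finset.mem_range.2 (by omega), rfl⟩
          · have hxbeq : xb = ((x + 1) + (l' : ZMod m)) + 1 := by
              rw [hxb]; push_cast; ring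
            rw [hxbeq]
            exact (cyc_adj' hm _).symm
      have hPRb : ∀ T : Finset (ZMod m), IsBundle (cycleGraph m) T → xc ∈ T →
          IsBundle (cycleGraph m) (T ∪ R) := by
        intro T hT hxcT
        rcases Nat.eq_zero_or_pos r with h0 | h0
        · rw [hR, h0]
          simpa using hT
        · obtain ⟨r', rfl⟩ : ∃ r', r = r' + 1 := ⟨r - 1, by omega⟩
          have hTconn : ((cycleGraph m).induce ((T : Finset (ZMod m)) : Set (ZMod m))).Connected := by
            rcases hT with h | h
            · exact absurd (by exact_mod_cast (Set.eq_empty_iff_forall_notMem.1 h xc))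
                (by simpa using hxcT)
            · exact h
          have hRconn : ((cycleGraph m).induce ((R : Finset (ZMod m)) : Set (ZMod m))).Connected := by
            rw [hR, hf]
            exact arc_conn' hm (x - (((r' + 1 : ℕ)) : ZMod m)) r'
          refine Or.inr (union_conn' hTconn hRconn hxcT (b := f 0) ?_ ?_)
          · rw [hR, Finset.mem_image]
            exact ⟨0, Finset.mem_range.2 (by omega), rfl⟩
          · have hf0 : f 0 = xc + 1 := by
              rw [hf, hxc]; push_cast; ring
            rw [hf0]
            exact cyc_adj' hm xc
      have hQsplit : IsSplitOn (cycleGraph m) (Finset.univ.erase x) (n' + 1) Q := by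
        refine ⟨?_, ?_, ?_, ?_⟩
        · intro j
          simp only [hQ]
          by_cases h1 : emb j = j₁ <;> by_cases h2 : emb j = j₂
          · rw [if_pos h1, if_pos h2]
            exact hPRb _ (hPLb _ (hbund _) (h1 ▸ hj₁))
              (Finset.mem_union_left _ (h2 ▸ hj₂))
          · rw [if_pos h1, if_neg h2, Finset.union_empty]
            exact hPLb _ (hbund _) (h1 ▸ hj₁)
          · rw [if_neg h1, if_pos h2, Finset.union_empty]
            exact hPRb _ (hbund _) (h2 ▸ hj₂)
          · rw [if_neg h1, if_neg h2, Finset.union_empty, Finset.union_empty]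
            exact hbund _
        · intro j j' hjj'
          rw [Finset.disjoint_left]
          intro v hvj hvj'
          rw [hmemQ] at hvj hvj'
          have hne : emb j ≠ emb j' := fun h => hjj' (hembinj h)
          rcases hvj with h | ⟨he, h⟩ | ⟨he, h⟩ <;> rcases hvj' with h' | ⟨he', h'⟩ | ⟨he', h'⟩
          · exact (Finset.disjoint_left.1 (hdisj _ _ hne) h) h'
          · exact (Finset.disjoint_left.1 (hdisj _ _ (hembne j)) h) (hLS h')
          · exact (Finset.disjoint_left.1 (hdisj _ _ (hembne j)) h) (hRS h')
          · exact (Finset.disjoint_left.1 (hdisj _ _ (hembne j')) h') (hLS h)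
          · exact hne (he.trans he'.symm)
          · exact hLR v h h'
          · exact (Finset.disjoint_left.1 (hdisj _ _ (hembne j')) h') (hRS h)
          · exact hLR v h' h
          · exact hne (he.trans he'.symm)
        · intro j v hv
          rw [hmemQ] at hv
          rw [Finset.mem_erase]
          refine ⟨?_, Finset.mem_univ v⟩
          rcases hv with h | ⟨he, h⟩ | ⟨he, h⟩
          · intro hvx
            subst hvx
            exact (Finset.disjoint_left.1 (hdisj _ _ (hembne j)) h) hxi₀
          · intro hvx; subst hvx; exact hxL h
          · intro hvx; subst hvx; exact hxR h
        · intro v hv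
          rw [Finset.mem_erase] at hv
          obtain ⟨k, hk⟩ := hcover v (Finset.mem_univ v)
          by_cases hki₀ : k = i₀
          · subst hki₀
            rcases hSerase v hk hv.1 with h | h
            · obtain ⟨j, hj⟩ := hsurj j₁ hj₁i₀
              exact ⟨j, (hmemQ j v).2 (Or.inr (Or.inl ⟨hj, h⟩))⟩
            · obtain ⟨j, hj⟩ := hsurj j₂ hj₂i₀
              exact ⟨j, (hmemQ j v).2 (Or.inr (Or.inr ⟨hj, h⟩))⟩
          · obtain ⟨j, hj⟩ := hsurj k hki₀
            exact ⟨j, (hmemQ j v).2 (Or.inl (hj ▸ hk))⟩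
      have hQval : ∀ j, q ≤ bval u (Q j) := by
        intro j
        refine (hq (emb j)).trans ?_
        rw [bval, bval]
        refine Finset.sum_le_sum_of_subset_of_nonneg ?_ (fun i _ _ => hu i)
        intro v hv
        exact (hmemQ j v).2 (Or.inl hv)
      rw [mmsOn, ← hrhs]
      exact le_csSup hbdd ⟨Q, hQsplit, hQval⟩
  unfold mms mmsOn
  rw [← mmsOn]
  exact Real.sSup_le hfinish h0le
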